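/- arXiv:2601.15756 — 4 statements merged into one kernel-verified Lean document; each statement's English description precedes it below -/
import Mathlib

section
/- M-equivalence of finite and infinite words is preserved under infinite concatenation: if (σᵢ)ᵢ and (σᵢ')ᵢ are sequences of nonempty finite words with σᵢ ≡_M σᵢ' for all i ∈ ℕ, then the infinite concatenations σ₀σ₁σ₂⋯ and σ₀'σ₁'σ₂'⋯ are M-equivalent as infinite words, i.e., for every state p: (p, σ₀σ₁⋯, true) ∈ Δ^ω ⟺ (p, σ₀'σ₁'⋯, true) ∈ Δ^ω. -/
/-- `DeltaStar Δ F p w q b`: there is a finite run of the Büchi automaton with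
transition relation `Δ` and final states `F` from `p` to `q` reading the word `w`,
where `b` records whether the run visits a final state. -/
inductive DeltaStar {Q A : Type} (Δ : Q → A → Q → Prop) (F : Q → Bool) :
    Q → List A → Q → Bool → Prop
  | nil (p : Q) : DeltaStar Δ F p [] p (F p)
  | cons {q r : Q} {w : List A} {b : Bool} (p : Q) (a : A) :
      Δ p a q → DeltaStar Δ F q w r b → DeltaStar Δ F p (a :: w) r (F p || b)

/-- Two finite words are `M`-equivalent iff the extended transition relation `Δ*`
does not distinguish them. -/
def MEquiv {Q A : Type} (Δ : Q → A → Q → Prop) (F : Q → Bool) (w w' : List A) : Prop :=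
  ∀ p q b, DeltaStar Δ F p w q b ↔ DeltaStar Δ F p w' q b

/-- `DeltaOmega Δ F p ρ`: there is an infinite run starting in `p` reading the
infinite word `ρ` that visits a final state infinitely often, i.e. `(p, ρ, true) ∈ Δ^ω`. -/
def DeltaOmega {Q A : Type} (Δ : Q → A → Q → Prop) (F : Q → Bool) (p : Q) (ρ : ℕ → A) : Prop :=
  ∃ r : ℕ → Q, r 0 = p ∧ (∀ i, Δ (r i) (ρ i) (r (i + 1))) ∧ ∀ n, ∃ m, n ≤ m ∧ F (r m) = true

/-- Concatenation of a finite word with an infinite word. -/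
def appendInf {A : Type} (σ : List A) (ρ : ℕ → A) : ℕ → A := fun k =>
  if h : k < σ.length then σ.get ⟨k, h⟩ else ρ (k - σ.length)

/-- `IsFlatten σ ρ`: the infinite word `ρ` is the infinite concatenation `σ₀σ₁σ₂⋯`. -/
def IsFlatten {A : Type} (σ : ℕ → List A) (ρ : ℕ → A) : Prop :=
  ∀ n k (h : k < (σ n).length),
    ρ ((∑ i ∈ Finset.range n, (σ i).length) + k) = (σ n).get ⟨k, h⟩

section Aux

variable {Q A : Type} (Δ : Q → A → Q → Prop) (F : Q → Bool)

/-- block decomposition helper -/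
lemma blk_exists (S : ℕ → ℕ) (hS0 : S 0 = 0) (hSlt : ∀ n, S n < S (n + 1)) (j : ℕ) :
    ∃ n, S n ≤ j ∧ j < S (n + 1) := by
  have hmono : StrictMono S := strictMono_nat_of_lt_succ hSlt
  have hself : ∀ n, n ≤ S n := fun n => hmono.le_apply
  refine ⟨Nat.findGreatest (fun n => S n ≤ j) j, ?_, ?_⟩
  · exact Nat.findGreatest_spec (P := fun n => S n ≤ j) (Nat.zero_le j)
      (show S 0 ≤ j from le_of_eq_of_le hS0 (Nat.zero_le j))
  · by_contra h
    push_neg at h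
    have h1 : Nat.findGreatest (fun n => S n ≤ j) j + 1 ≤ j :=
      le_trans (hself _) h
    exact Nat.findGreatest_is_greatest (Nat.lt_succ_self _) h1 h

lemma blk_unique (S : ℕ → ℕ) (hSlt : ∀ n, S n < S (n + 1)) {j n m : ℕ}
    (h1 : S n ≤ j) (h2 : j < S (n + 1)) (h3 : S m ≤ j) (h4 : j < S (m + 1)) : n = m := by
  have hmono : StrictMono S := strictMono_nat_of_lt_succ hSlt
  rcases lt_trichotomy n m with h | h | h
  · exact absurd (lt_of_le_of_lt h3 h2) (not_lt.mpr (hmono.monotone h))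
  · exact h
  · exact absurd (lt_of_le_of_lt h1 h4) (not_lt.mpr (hmono.monotone h))

/-- extraction: a segment of an infinite run gives a DeltaStar fact -/
lemma extract (r : ℕ → Q) (ρ : ℕ → A) (hr : ∀ i, Δ (r i) (ρ i) (r (i + 1))) :
    ∀ (w : List A) (m : ℕ), (∀ k (h : k < w.length), ρ (m + k) = w.get ⟨k, h⟩) →
    ∃ b, DeltaStar Δ F (r m) w (r (m + w.length)) b ∧
      (b = true ↔ ∃ j, j ≤ w.length ∧ F (r (m + j)) = true) := by
  intro w
  induction w with
  | nil =>
    intro m _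
    refine ⟨F (r m), by simpa using DeltaStar.nil (r m), ?_⟩
    constructor
    · intro h; exact ⟨0, le_refl _, by simpa using h⟩
    · rintro ⟨j, hj, hF⟩
      obtain rfl : j = 0 := Nat.le_zero.mp hj
      simpa using hF
  | cons a w ih =>
    intro m hw
    obtain ⟨b, hb, hbiff⟩ := ih (m + 1) (fun k h => by
      have := hw (k + 1) (by simpa using Nat.succ_lt_succ h)
      simpa [show m + 1 + k = m + (k + 1) from by omega] using this)
    have ha : ρ m = a := by simpa using hw 0 (by simp)
    have htr : Δ (r m) a (r (m + 1)) := ha ▸ hr m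
    refine ⟨F (r m) || b, ?_, ?_⟩
    · have : m + (a :: w).length = (m + 1) + w.length := by simp; omega
      rw [this]
      exact DeltaStar.cons (r m) a htr hb
    · constructor
      · intro h
        rcases Bool.or_eq_true_iff.mp h with h | h
        · exact ⟨0, Nat.zero_le _, by simpa using h⟩
        · obtain ⟨j, hj, hF⟩ := hbiff.mp h
          exact ⟨j + 1, by simp; omega, by
            simpa [show m + 1 + j = m + (j + 1) from by omega] using hF⟩
      · rintro ⟨j, hj, hF⟩
        rcases Nat.eq_zero_or_pos j with rfl | hj0
        · simp at hF; simp [hF]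
        · obtain ⟨j', rfl⟩ := Nat.exists_eq_succ_of_ne_zero (Nat.pos_iff_ne_zero.mp hj0)
          simp only [Bool.or_eq_true]
          right
          exact hbiff.mpr ⟨j', by simp at hj; omega, by
            have : m + (j' + 1) = m + 1 + j' := by omega
            rwa [this] at hF⟩

/-- from a DeltaStar fact, get a finite run as a function -/
lemma toRun {p q : Q} {w : List A} {b : Bool} (h : DeltaStar Δ F p w q b) :
    ∃ g : ℕ → Q, g 0 = p ∧ g w.length = q ∧
      (∀ k (hk : k < w.length), Δ (g k) (w.get ⟨k, hk⟩) (g (k + 1))) ∧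
      (b = true → ∃ k, k ≤ w.length ∧ F (g k) = true) := by
  induction h with
  | nil p =>
    exact ⟨fun _ => p, rfl, rfl, fun k hk => absurd hk (by simp),
      fun h => ⟨0, le_refl _, h⟩⟩
  | cons p a htr hrest ih =>
    obtain ⟨g', hg0, hglen, hgtr, hgF⟩ := ih
    refine ⟨fun k => if k = 0 then p else g' (k - 1), by simp, by simp [hglen], ?_, ?_⟩
    · intro k hk
      match k with
      | 0 => simpa [hg0] using htr
      | k + 1 => simpa using hgtr k (by simpa using hk)
    · intro h
      rcases Bool.or_eq_true_iff.mp h with h | h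
      · exact ⟨0, Nat.zero_le _, by simpa using h⟩
      · obtain ⟨k, hk, hF⟩ := hgF h
        exact ⟨k + 1, by simp; omega, by simpa using hF⟩

/-- stitching: blockwise runs with infinitely many flags give a DeltaOmega run -/
lemma stitch (σ' : ℕ → List A) (hne' : ∀ i, σ' i ≠ []) (ρ' : ℕ → A)
    (hρ' : IsFlatten σ' ρ') (q : ℕ → Q) (b : ℕ → Bool)
    (hst : ∀ n, DeltaStar Δ F (q n) (σ' n) (q (n + 1)) (b n))
    (hb : ∀ n, ∃ m, n ≤ m ∧ b m = true) :
    DeltaOmega Δ F (q 0) ρ' := by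
  choose g hg0 hglen hgtr hgF using fun n => toRun Δ F (hst n)
  set S : ℕ → ℕ := fun n => ∑ i ∈ Finset.range n, (σ' i).length with hSdef
  have hS0 : S 0 = 0 := by simp [hSdef]
  have hSsucc : ∀ n, S (n + 1) = S n + (σ' n).length := fun n => by
    simp [hSdef, Finset.sum_range_succ]
  have hSlt : ∀ n, S n < S (n + 1) := fun n => by
    rw [hSsucc]
    have := List.length_pos_iff.mpr (hne' n)
    omega
  have hmono : StrictMono S := strictMono_nat_of_lt_succ hSlt
  have hself : ∀ n, n ≤ S n := fun n => hmono.le_apply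
  -- the stitched run
  classical
  have hblk : ∀ j, ∃ n, S n ≤ j ∧ j < S (n + 1) := blk_exists S hS0 hSlt
  choose blk hblk1 hblk2 using hblk
  set r' : ℕ → Q := fun j => g (blk j) (j - S (blk j)) with hr'def
  have hbound : ∀ n, g (n + 1) 0 = g n ((σ' n).length) := fun n => by
    rw [hg0, hglen]
  have key : ∀ n j, S n ≤ j → j ≤ S (n + 1) → r' j = g n (j - S n) := by
    intro n j h1 h2
    rcases lt_or_eq_of_le h2 with h2 | h2
    · have : blk j = n := blk_unique S hSlt (hblk1 j) (hblk2 j) h1 h2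
      simp [hr'def, this]
    · have hb1 : S (n + 1) ≤ j := le_of_eq h2.symm
      have hb2 : j < S (n + 2) := h2 ▸ hSlt (n + 1)
      have : blk j = n + 1 := blk_unique S hSlt (hblk1 j) (hblk2 j) hb1 hb2
      have hj : j - S (n + 1) = 0 := by omega
      have hj' : j - S n = (σ' n).length := by
        have := hSsucc n; omega
      rw [hr'def]
      simp only [this, hj, hj']
      exact hbound n
  refine ⟨r', ?_, ?_, ?_⟩
  · have := key 0 0 (le_of_eq hS0.symm) (Nat.zero_le _)
    rw [this, hS0, hg0]
  · intro i
    set n := blk i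
    have h1 : S n ≤ i := hblk1 i
    have h2 : i < S (n + 1) := hblk2 i
    have hk : i - S n < (σ' n).length := by have := hSsucc n; omega
    have e1 : r' i = g n (i - S n) := key n i h1 (le_of_lt h2)
    have e2 : r' (i + 1) = g n (i + 1 - S n) := key n (i + 1) (by omega) (by omega)
    have e3 : ρ' i = (σ' n).get ⟨i - S n, hk⟩ := by
      have := hρ' n (i - S n) hk
      rwa [show S n + (i - S n) = i by omega] at this
    rw [e1, e2, e3, show i + 1 - S n = (i - S n) + 1 by omega]
    exact hgtr n (i - S n) hk
  · intro N
    obtain ⟨m, hm, hbm⟩ := hb N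
    obtain ⟨k, hk, hF⟩ := hgF m hbm
    refine ⟨S m + k, ?_, ?_⟩
    · calc N ≤ m := hm
        _ ≤ S m := hself m
        _ ≤ S m + k := Nat.le_add_right _ _
    · have : r' (S m + k) = g m (S m + k - S m) :=
        key m (S m + k) (Nat.le_add_right _ _) (by rw [hSsucc]; omega)
      rw [this, show S m + k - S m = k by omega]
      exact hF

/-- unstitching: a DeltaOmega run decomposes into blockwise DeltaStar facts -/
lemma unstitch (σ : ℕ → List A) (hne : ∀ i, σ i ≠ []) (ρ : ℕ → A)
    (hρ : IsFlatten σ ρ) (p : Q) (h : DeltaOmega Δ F p ρ) :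
    ∃ (q : ℕ → Q) (b : ℕ → Bool), q 0 = p ∧
      (∀ n, DeltaStar Δ F (q n) (σ n) (q (n + 1)) (b n)) ∧
      ∀ n, ∃ m, n ≤ m ∧ b m = true := by
  obtain ⟨r, hr0, hr, hinf⟩ := h
  set S : ℕ → ℕ := fun n => ∑ i ∈ Finset.range n, (σ i).length with hSdef
  have hS0 : S 0 = 0 := by simp [hSdef]
  have hSsucc : ∀ n, S (n + 1) = S n + (σ n).length := fun n => by
    simp [hSdef, Finset.sum_range_succ]
  have hSlt : ∀ n, S n < S (n + 1) := fun n => by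
    rw [hSsucc]
    have := List.length_pos_iff.mpr (hne n)
    omega
  have hmono : StrictMono S := strictMono_nat_of_lt_succ hSlt
  have hext : ∀ n, ∃ b, DeltaStar Δ F (r (S n)) (σ n) (r (S n + (σ n).length)) b ∧
      (b = true ↔ ∃ j, j ≤ (σ n).length ∧ F (r (S n + j)) = true) := fun n =>
    extract Δ F r ρ hr (σ n) (S n) (fun k hk => hρ n k hk)
  choose b hb1 hb2 using hext
  refine ⟨fun n => r (S n), b, by show r (S 0) = p; rw [hS0, hr0], fun n => by
    have := hb1 n
    rwa [← hSsucc n] at this, ?_⟩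
  intro n
  obtain ⟨m, hm, hF⟩ := hinf (S n)
  obtain ⟨n', h1, h2⟩ := blk_exists S hS0 hSlt m
  have hn : n ≤ n' := by
    by_contra hc
    push_neg at hc
    have : S (n' + 1) ≤ S n := hmono.monotone hc
    omega
  refine ⟨n', hn, (hb2 n').mpr ⟨m - S n', ?_, ?_⟩⟩
  · have := hSsucc n'; omega
  · rwa [show S n' + (m - S n') = m by omega]

lemma one_dir (σ σ' : ℕ → List A) (ρ ρ' : ℕ → A)
    (hne : ∀ i, σ i ≠ []) (hne' : ∀ i, σ' i ≠ [])
    (heq : ∀ i p q b, DeltaStar Δ F p (σ i) q b → DeltaStar Δ F p (σ' i) q b)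
    (hρ : IsFlatten σ ρ) (hρ' : IsFlatten σ' ρ') (p : Q)
    (h : DeltaOmega Δ F p ρ) : DeltaOmega Δ F p ρ' := by
  obtain ⟨q, b, hq0, hst, hb⟩ := unstitch Δ F σ hne ρ hρ p h
  have := stitch Δ F σ' hne' ρ' hρ' q b (fun n => heq n _ _ _ (hst n)) hb
  rwa [hq0] at this

end Aux

/-- `M`-equivalence is preserved under infinite concatenation of
nonempty finite words. -/
theorem mequiv_infinite_concat {Q A : Type} [Finite Q] (Δ : Q → A → Q → Prop) (F : Q → Bool)
    (σ σ' : ℕ → List A) (ρ ρ' : ℕ → A)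
    (hne : ∀ i, σ i ≠ []) (hne' : ∀ i, σ' i ≠ [])
    (heq : ∀ i, MEquiv Δ F (σ i) (σ' i))
    (hρ : IsFlatten σ ρ) (hρ' : IsFlatten σ' ρ') :
    ∀ p : Q, DeltaOmega Δ F p ρ ↔ DeltaOmega Δ F p ρ' := by
  intro p
  constructor
  · exact one_dir Δ F σ σ' ρ ρ' hne hne'
      (fun i p q b h => (heq i p q b).mp h) hρ hρ' p
  · exact one_dir Δ F σ' σ ρ' ρ hne' hne
      (fun i p q b h => (heq i p q b).mpr h) hρ' hρ p
end

section
/- M-equivalence of finite words concatenated with M-equivalent infinite tails yields M-equivalent infinite words: if σ ≡_M σ' for finite words σ, σ', and ρ ≡_M ρ' for infinite words ρ, ρ' (meaning for all p: (p, ρ, true) ∈ Δ^ω ⟺ (p, ρ', true) ∈ Δ^ω), then σρ ≡_M σ'ρ' as infinite words. -/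
lemma star_of_run {Q A : Type} (Δ : Q → A → Q → Prop) (F : Q → Bool)
    (w : List A) (t : ℕ → Q)
    (h : ∀ i (hi : i < w.length), Δ (t i) (w.get ⟨i, hi⟩) (t (i+1))) :
    ∃ b, DeltaStar Δ F (t 0) w (t w.length) b := by
  induction w generalizing t with
  | nil => exact ⟨F (t 0), DeltaStar.nil _⟩
  | cons a w ih =>
    obtain ⟨b, hb⟩ := ih (fun i => t (i+1))
      (fun i hi => h (i+1) (by simpa using Nat.succ_lt_succ hi))
    exact ⟨F (t 0) || b, DeltaStar.cons _ _ (h 0 (by simp)) hb⟩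

lemma run_of_star {Q A : Type} {Δ : Q → A → Q → Prop} {F : Q → Bool}
    {p q : Q} {w : List A} {b : Bool} (h : DeltaStar Δ F p w q b) :
    ∃ t : ℕ → Q, t 0 = p ∧ t w.length = q ∧
      ∀ i (hi : i < w.length), Δ (t i) (w.get ⟨i, hi⟩) (t (i+1)) := by
  induction h with
  | nil p => exact ⟨fun _ => p, rfl, rfl, fun i hi => absurd hi (by simp)⟩
  | cons p a ha _ ih =>
    obtain ⟨t, ht0, htl, htr⟩ := ih
    refine ⟨fun i => if i = 0 then p else t (i - 1), rfl, by simp [htl], ?_⟩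
    intro i hi
    match i with
    | 0 => simpa [ht0] using ha
    | Nat.succ j =>
      simpa using htr j (by simpa using Nat.lt_of_succ_lt_succ hi)

lemma omega_append_iff {Q A : Type} (Δ : Q → A → Q → Prop) (F : Q → Bool)
    (σ : List A) (ρ : ℕ → A) (p : Q) :
    DeltaOmega Δ F p (appendInf σ ρ) ↔
      ∃ q b, DeltaStar Δ F p σ q b ∧ DeltaOmega Δ F q ρ := by
  constructor
  · rintro ⟨r, hr0, hrΔ, hrF⟩
    obtain ⟨b, hb⟩ := star_of_run Δ F σ r (fun i hi => by
      have := hrΔ i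
      rwa [appendInf, dif_pos hi] at this)
    rw [hr0] at hb
    refine ⟨r σ.length, b, hb, fun k => r (σ.length + k), rfl, ?_, ?_⟩
    · intro i
      have := hrΔ (σ.length + i)
      rw [appendInf, dif_neg (by omega), Nat.add_sub_cancel_left] at this
      exact this
    · intro n
      obtain ⟨m, hm, hFm⟩ := hrF (σ.length + n)
      refine ⟨m - σ.length, by omega, ?_⟩
      show F (r (σ.length + (m - σ.length))) = true
      rw [Nat.add_sub_cancel' (by omega)]
      exact hFm
  · rintro ⟨q, b, hstar, s, hs0, hsΔ, hsF⟩
    obtain ⟨t, ht0, htl, htr⟩ := run_of_star hstar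
    refine ⟨fun k => if h : k < σ.length then t k else s (k - σ.length),
      ?_, ?_, ?_⟩
    · show (if h : 0 < σ.length then t 0 else s (0 - σ.length)) = p
      by_cases h : 0 < σ.length
      · rw [dif_pos h]; exact ht0
      · rw [dif_neg h]
        have hl : σ.length = 0 := by omega
        rw [hl, Nat.sub_zero, hs0, ← htl, hl]
        exact ht0
    · intro i
      show Δ (if h : i < σ.length then t i else s (i - σ.length))
        (appendInf σ ρ i)
        (if h : i + 1 < σ.length then t (i+1) else s (i + 1 - σ.length))
      rcases lt_or_ge i σ.length with hi | hi
      · rw [appendInf, dif_pos hi, dif_pos hi]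
        rcases lt_or_ge (i+1) σ.length with hi1 | hi1
        · rw [dif_pos hi1]; exact htr i hi
        · have heq : i + 1 = σ.length := by omega
          rw [dif_neg (by omega), heq, Nat.sub_self, hs0, ← htl]
          have h2 := htr i hi
          rwa [heq] at h2
      · rw [appendInf, dif_neg (by omega), dif_neg (by omega), dif_neg (by omega)]
        have heq : i + 1 - σ.length = (i - σ.length) + 1 := by omega
        rw [heq]
        exact hsΔ (i - σ.length)
    · intro n
      obtain ⟨m, hm, hFm⟩ := hsF n
      refine ⟨σ.length + m, by omega, ?_⟩
      show F (if h : σ.length + m < σ.length then t (σ.length + m)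
        else s (σ.length + m - σ.length)) = true
      rw [dif_neg (by omega), Nat.add_sub_cancel_left]
      exact hFm

/-- concatenating `M`-equivalent finite words with `M`-equivalent
infinite tails yields `M`-equivalent infinite words. -/
theorem mequiv_append_inf {Q A : Type} [Finite Q] (Δ : Q → A → Q → Prop) (F : Q → Bool)
    (σ σ' : List A) (ρ ρ' : ℕ → A)
    (hfin : MEquiv Δ F σ σ')
    (hinf : ∀ p : Q, DeltaOmega Δ F p ρ ↔ DeltaOmega Δ F p ρ') :
    ∀ p : Q, DeltaOmega Δ F p (appendInf σ ρ) ↔ DeltaOmega Δ F p (appendInf σ' ρ') := by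
  intro p
  rw [omega_append_iff, omega_append_iff]
  constructor
  · rintro ⟨q, b, hs, ho⟩
    exact ⟨q, b, (hfin p q b).1 hs, (hinf q).1 ho⟩
  · rintro ⟨q, b, hs, ho⟩
    exact ⟨q, b, (hfin p q b).2 hs, (hinf q).2 ho⟩
end

section
/- Hyperedge replacement is associative in the following sense: if H, J are hypergraphs with H containing exactly one hyperedge, and K̄ is a hyperedge assignment for J, then H[J[K̄]] = H[J][K̄], i.e., replacing H's hyperedge by the graph J[K̄] yields the same hypergraph (up to isomorphism) as first replacing H's hyperedge by J and then replacing the hyperedges inherited from J according to K̄. -/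
/-- A hypergraph `H = (V, n, →, E, α, γ, ℓ)`: finitely many concrete nodes `V`,
abstract nodes `Fin n`, a labeled edge relation on `W = V ⊕ Fin n`, finitely many
hyperedges `E` with attached-node sequences, a node coloring, and hyperedge labels. -/
structure Hypergraph' (COL ACT LAB : Type) : Type 1 where
  V : Type
  finV : Finite V
  n : ℕ
  E : Type
  finE : Finite E
  edge : (V ⊕ Fin n) → ACT → (V ⊕ Fin n) → Prop
  att : E → List (V ⊕ Fin n)
  col : V → Set COL
  lab : E → LAB

variable {COL ACT LAB : Type}

/-- Concrete nodes of the hypergraph obtained by replacing every hyperedge `e` of `H`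
by the hypergraph `K e`. -/
abbrev RepV (H : Hypergraph' COL ACT LAB) (K : H.E → Hypergraph' COL ACT LAB) : Type :=
  H.V ⊕ (Σ e : H.E, (K e).V)

/-- Embedding of the nodes of `H` into the nodes of the replacement `H[K]`. -/
def emb (H : Hypergraph' COL ACT LAB) (K : H.E → Hypergraph' COL ACT LAB) :
    (H.V ⊕ Fin H.n) → (RepV H K ⊕ Fin H.n) :=
  Sum.map Sum.inl id

/-- The map `f_e` sending the `i`-th abstract node of `K e` to the `i`-th node attached
to `e` in `H`, and acting as the (tagged) identity on concrete nodes of `K e`. -/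
def fmap (H : Hypergraph' COL ACT LAB) (K : H.E → Hypergraph' COL ACT LAB)
    (harity : ∀ e, (K e).n = (H.att e).length) (e : H.E) :
    ((K e).V ⊕ Fin (K e).n) → (RepV H K ⊕ Fin H.n)
  | Sum.inl v => Sum.inl (Sum.inr ⟨e, v⟩)
  | Sum.inr i => emb H K ((H.att e).get (Fin.cast (harity e) i))

/-- Hyperedge replacement `H[K]`: every hyperedge `e` of `H` is replaced by the
hypergraph `K e`, identifying the `i`-th abstract node of `K e` with the `i`-th node
attached to `e`. -/
def replace (H : Hypergraph' COL ACT LAB) (K : H.E → Hypergraph' COL ACT LAB)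
    (harity : ∀ e, (K e).n = (H.att e).length) : Hypergraph' COL ACT LAB where
  V := RepV H K
  finV := by
    haveI := H.finV; haveI := H.finE
    haveI : ∀ e : H.E, Finite (K e).V := fun e => (K e).finV
    infer_instance
  n := H.n
  E := Σ e : H.E, (K e).E
  finE := by
    haveI := H.finE
    haveI : ∀ e : H.E, Finite (K e).E := fun e => (K e).finE
    infer_instance
  edge := fun u a v =>
    (∃ u' v', H.edge u' a v' ∧ u = emb H K u' ∧ v = emb H K v') ∨
    (∃ e u' v', (K e).edge u' a v' ∧ u = fmap H K harity e u' ∧ v = fmap H K harity e v')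
  att := fun p => ((K p.1).att p.2).map (fmap H K harity p.1)
  col := fun v => Sum.elim H.col (fun q => (K q.1).col q.2) v
  lab := fun p => (K p.1).lab p.2

/-- An isomorphism of hypergraphs: bijections on concrete nodes and hyperedges
(fixing abstract nodes up to the equality of arities) preserving edges, attachments,
colors and labels. -/
structure HGIso (H₁ H₂ : Hypergraph' COL ACT LAB) where
  hn : H₁.n = H₂.n
  eV : H₁.V ≃ H₂.V
  eE : H₁.E ≃ H₂.E
  hedge : ∀ u a v, H₁.edge u a v ↔
    H₂.edge (Sum.map (⇑eV) (Fin.cast hn) u) a (Sum.map (⇑eV) (Fin.cast hn) v)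
  hatt : ∀ e, H₂.att (eE e) = (H₁.att e).map (Sum.map (⇑eV) (Fin.cast hn))
  hcol : ∀ v, H₂.col (eV v) = H₁.col v
  hlab : ∀ e, H₂.lab (eE e) = H₁.lab e

section Aux

variable (H J : Hypergraph' COL ACT LAB) (K : J.E → Hypergraph' COL ACT LAB)
  (hJ : ∀ e : H.E, J.n = (H.att e).length)
  (hK : ∀ e', (K e').n = (J.att e').length)

/-- The node bijection for associativity. -/
def assocV :
    (replace H (fun _ => replace J K hK) (fun e => hJ e)).V ≃
    (replace (replace H (fun _ => J) hJ) (fun ee => K ee.2)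
        (fun ee => (hK ee.2).trans (List.length_map _).symm)).V where
  toFun x := match x with
    | .inl v => .inl (.inl v)
    | .inr ⟨e, .inl w⟩ => .inl (.inr ⟨e, w⟩)
    | .inr ⟨e, .inr ⟨e', x⟩⟩ => .inr ⟨⟨e, e'⟩, x⟩
  invFun x := match x with
    | .inl (.inl v) => .inl v
    | .inl (.inr ⟨e, w⟩) => .inr ⟨e, .inl w⟩
    | .inr ⟨⟨e, e'⟩, x⟩ => .inr ⟨e, .inr ⟨e', x⟩⟩
  left_inv := by rintro (v | ⟨e, w | ⟨e', x⟩⟩) <;> rfl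
  right_inv := by rintro ((v | ⟨e, w⟩) | ⟨⟨e, e'⟩, x⟩) <;> rfl

/-- The hyperedge bijection for associativity. -/
def assocE :
    (replace H (fun _ => replace J K hK) (fun e => hJ e)).E ≃
    (replace (replace H (fun _ => J) hJ) (fun ee => K ee.2)
        (fun ee => (hK ee.2).trans (List.length_map _).symm)).E where
  toFun x := match x with
    | ⟨e, e', x⟩ => ⟨⟨e, e'⟩, x⟩
  invFun x := match x with
    | ⟨⟨e, e'⟩, x⟩ => ⟨e, e', x⟩
  left_inv := by rintro ⟨e, e', x⟩; rfl
  right_inv := by rintro ⟨⟨e, e'⟩, x⟩; rfl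

lemma assoc_lem1 (u : H.V ⊕ Fin H.n) :
    Sum.map (assocV H J K hJ hK) (Fin.cast rfl)
      (emb H (fun _ => replace J K hK) u)
    = emb (replace H (fun _ => J) hJ) (fun ee => K ee.2)
        (emb H (fun _ => J) u) := by
  cases u <;> rfl

lemma assoc_lem2 (e : H.E) (w : J.V ⊕ Fin J.n) :
    Sum.map (assocV H J K hJ hK) (Fin.cast rfl)
      (fmap H (fun _ => replace J K hK) (fun e => hJ e) e (emb J K w))
    = emb (replace H (fun _ => J) hJ) (fun ee => K ee.2)
        (fmap H (fun _ => J) hJ e w) := by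
  cases w with
  | inl w => rfl
  | inr i => exact assoc_lem1 H J K hJ hK ((H.att e).get (Fin.cast (hJ e) i))

lemma assoc_lem3 (e : H.E) (e' : J.E) (w : (K e').V ⊕ Fin (K e').n) :
    Sum.map (assocV H J K hJ hK) (Fin.cast rfl)
      (fmap H (fun _ => replace J K hK) (fun e => hJ e) e (fmap J K hK e' w))
    = fmap (replace H (fun _ => J) hJ) (fun ee => K ee.2)
        (fun ee => (hK ee.2).trans (List.length_map _).symm) ⟨e, e'⟩ w := by
  cases w with
  | inl x => rfl
  | inr i =>
    have h := assoc_lem2 H J K hJ hK e ((J.att e').get (Fin.cast (hK e') i))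
    refine h.trans
      (congrArg (emb (replace H (fun _ => J) hJ) (fun ee => K ee.2)) ?_)
    show fmap H (fun _ => J) hJ e ((J.att e').get (Fin.cast (hK e') i))
      = ((J.att e').map (fmap H (fun _ => J) hJ e)).get
          (Fin.cast ((hK e').trans (List.length_map _).symm) i)
    simp [List.getElem_map]

end Aux

/-- associativity of hyperedge replacement. If `H` has exactly one
hyperedge (witnessed by `e₀` and `huniq`), `J` is a hypergraph of matching arity and
`K̄` a hyperedge assignment for `J`, then `H[J[K̄]]` and `H[J][K̄]` are isomorphic. -/
theorem replace_assoc
    (H J : Hypergraph' COL ACT LAB) (K : J.E → Hypergraph' COL ACT LAB)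
    (e₀ : H.E) (huniq : ∀ e : H.E, e = e₀)
    (hJ : ∀ e : H.E, J.n = (H.att e).length)
    (hK : ∀ e', (K e').n = (J.att e').length) :
    Nonempty (HGIso
      (replace H (fun _ => replace J K hK) (fun e => hJ e))
      (replace (replace H (fun _ => J) hJ) (fun ee => K ee.2)
        (fun ee => (hK ee.2).trans (List.length_map _).symm))) := by
  have hinj : Function.Injective
      (Sum.map (assocV H J K hJ hK) (Fin.cast (rfl : H.n = H.n))) :=
    Function.Injective.sumMap (assocV H J K hJ hK).injective
      (fun a b h => by simpa [Fin.ext_iff] using h)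
  refine ⟨{ hn := rfl
            eV := assocV H J K hJ hK
            eE := assocE H J K hJ hK
            hedge := ?_
            hatt := ?_
            hcol := ?_
            hlab := ?_ }⟩
  · intro u a v
    constructor
    · rintro (⟨u', v', h, rfl, rfl⟩ | ⟨e, u', v', hjk, rfl, rfl⟩)
      · exact Or.inl ⟨_, _, Or.inl ⟨u', v', h, rfl, rfl⟩,
          assoc_lem1 H J K hJ hK u', assoc_lem1 H J K hJ hK v'⟩
      · rcases hjk with ⟨p, q, hpq, rfl, rfl⟩ | ⟨e', p, q, hpq, rfl, rfl⟩
        · exact Or.inl ⟨_, _, Or.inr ⟨e, p, q, hpq, rfl, rfl⟩,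
            assoc_lem2 H J K hJ hK e p, assoc_lem2 H J K hJ hK e q⟩
        · exact Or.inr ⟨⟨e, e'⟩, p, q, hpq,
            assoc_lem3 H J K hJ hK e e' p, assoc_lem3 H J K hJ hK e e' q⟩
    · rintro (⟨u', v', (⟨p, q, h, rfl, rfl⟩ | ⟨e, p, q, h, rfl, rfl⟩), hu, hv⟩ |
        ⟨⟨e, e'⟩, p, q, h, hu, hv⟩)
      · have hu' := hinj (hu.trans (assoc_lem1 H J K hJ hK p).symm)
        have hv' := hinj (hv.trans (assoc_lem1 H J K hJ hK q).symm)
        exact Or.inl ⟨p, q, h, hu', hv'⟩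
      · have hu' := hinj (hu.trans (assoc_lem2 H J K hJ hK e p).symm)
        have hv' := hinj (hv.trans (assoc_lem2 H J K hJ hK e q).symm)
        exact Or.inr ⟨e, _, _, Or.inl ⟨p, q, h, rfl, rfl⟩, hu', hv'⟩
      · have hu' := hinj (hu.trans (assoc_lem3 H J K hJ hK e e' p).symm)
        have hv' := hinj (hv.trans (assoc_lem3 H J K hJ hK e e' q).symm)
        exact Or.inr ⟨e, _, _, Or.inr ⟨e', p, q, h, rfl, rfl⟩, hu', hv'⟩
  · rintro ⟨e, e', x⟩
    show ((K e').att x).map _ = ((((K e').att x).map (fmap J K hK e')).map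
        (fmap H (fun _ => replace J K hK) (fun e => hJ e) e)).map _
    simp only [List.map_map]
    exact (List.map_congr_left fun w _ => (assoc_lem3 H J K hJ hK e e' w).symm).trans
      (by induction (K e').att x with
        | nil => rfl
        | cons a l ih => exact congrArg (List.cons _) ih)
  · rintro (v | ⟨e, w | ⟨e', x⟩⟩) <;> rfl
  · rintro ⟨e, e', x⟩; rfl
end

section
/- For any infinite word ρ over Σ and state p of a Büchi automaton M with finite state set Q, (p, ρ, true) ∈ Δ^ω if and only if there exists a factorization ρ = σ₀σ₁σ₂⋯ into nonempty finite words and a sequence of states q₀ = p, q₁, q₂, … and booleans b₀, b₁, … such that (qᵢ, σᵢ, q_{i+1}, bᵢ) ∈ Δ* for every i and bᵢ = true for infinitely many i. -/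
section Aux
variable {Q A : Type} {Δ : Q → A → Q → Prop} {F : Q → Bool}

lemma exists_run {p q : Q} {w : List A} {b : Bool}
    (h : DeltaStar Δ F p w q b) :
    ∃ s : ℕ → Q, s 0 = p ∧ s w.length = q ∧
      (∀ k (hk : k < w.length), Δ (s k) (w.get ⟨k, hk⟩) (s (k + 1))) ∧
      (b = true → ∃ k, k ≤ w.length ∧ F (s k) = true) := by
  induction h with
  | nil p =>
      exact ⟨fun _ => p, rfl, rfl, fun k hk => absurd hk (by simp),
        fun hb => ⟨0, le_refl _, hb⟩⟩
  | @cons q r w b' p a hΔ hD ih =>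
      obtain ⟨s, hs0, hslen, hstep, hF⟩ := ih
      refine ⟨fun k => Nat.casesOn k p (fun k => s k), rfl, ?_, ?_, ?_⟩
      · simpa using hslen
      · intro k hk
        cases k with
        | zero => simpa [hs0] using hΔ
        | succ k =>
            have hk' : k < w.length := by simpa using hk
            simpa using hstep k hk'
      · intro hb
        rcases Bool.or_eq_true_iff.mp hb with h | h
        · exact ⟨0, Nat.zero_le _, h⟩
        · obtain ⟨k, hk, hFk⟩ := hF h
          exact ⟨k + 1, by simpa using Nat.succ_le_succ hk, hFk⟩

end Aux

/-- `(p, ρ, true) ∈ Δ^ω` iff `ρ` factors into nonempty finite words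
`σ₀σ₁σ₂⋯` along states `q₀ = p, q₁, …` and flags `b₀, b₁, …` with
`(qᵢ, σᵢ, q_{i+1}, bᵢ) ∈ Δ*` for all `i` and `bᵢ = true` infinitely often. -/
theorem deltaOmega_iff_factorization {Q A : Type} [Finite Q]
    (Δ : Q → A → Q → Prop) (F : Q → Bool) (p : Q) (ρ : ℕ → A) :
    DeltaOmega Δ F p ρ ↔
      ∃ (σ : ℕ → List A) (q : ℕ → Q) (b : ℕ → Bool),
        IsFlatten σ ρ ∧ (∀ i, σ i ≠ []) ∧ q 0 = p ∧
        (∀ i, DeltaStar Δ F (q i) (σ i) (q (i + 1)) (b i)) ∧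
        (∀ n, ∃ m, n ≤ m ∧ b m = true) := by
  constructor
  · rintro ⟨r, hr0, hstep, hF⟩
    refine ⟨fun n => [ρ n], r, fun n => F (r n) || F (r (n + 1)), ?_, by simp, hr0, ?_, ?_⟩
    · intro n k hk
      have hk0 : k = 0 := Nat.lt_one_iff.mp (by simpa using hk)
      subst hk0
      simp
    · intro i
      exact DeltaStar.cons (r i) (ρ i) (hstep i) (DeltaStar.nil (r (i + 1)))
    · intro n
      obtain ⟨m, hm, hFm⟩ := hF n
      exact ⟨m, hm, by simp [hFm]⟩
  · rintro ⟨σ, q, b, hflat, hne, hq0, hDS, hb⟩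
    choose s hs0 hslen hstep hF using fun n => exists_run (hDS n)
    set S : ℕ → ℕ := fun n => ∑ i ∈ Finset.range n, (σ i).length with hS
    have hL : ∀ n, 0 < (σ n).length := fun n => List.length_pos_iff.mpr (hne n)
    have hSsucc : ∀ n, S (n + 1) = S n + (σ n).length := fun n => Finset.sum_range_succ _ n
    have hS0 : S 0 = 0 := rfl
    have hSmono : StrictMono S := strictMono_nat_of_lt_succ (fun n => by
      rw [hSsucc]; exact Nat.lt_add_of_pos_right (hL n))
    have hSge : ∀ n, n ≤ S n := fun n => by
      calc n = ∑ _i ∈ Finset.range n, 1 := by simp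
      _ ≤ S n := Finset.sum_le_sum (fun i _ => hL i)
    have hexists : ∀ m, ∃ n, S n ≤ m ∧ m < S (n + 1) := by
      intro m
      induction m with
      | zero => exact ⟨0, le_refl _, by rw [hSsucc, hS0]; simpa using hL 0⟩
      | succ m ih =>
          obtain ⟨n, h1, h2⟩ := ih
          rcases Nat.lt_or_ge (m + 1) (S (n + 1)) with h | h
          · exact ⟨n, by omega, h⟩
          · have heq : S (n + 1) = m + 1 := by omega
            refine ⟨n + 1, by omega, ?_⟩
            rw [hSsucc (n + 1), heq]
            exact Nat.lt_add_of_pos_right (hL (n + 1))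
    have huniq : ∀ m n n', S n ≤ m → m < S (n + 1) → S n' ≤ m → m < S (n' + 1) → n = n' := by
      intro m n n' h1 h2 h3 h4
      by_contra hnn
      rcases Nat.lt_or_ge n n' with h | h
      · have : S (n + 1) ≤ S n' := hSmono.monotone (Nat.succ_le_of_lt h)
        omega
      · have hlt : n' < n := lt_of_le_of_ne h (Ne.symm hnn)
        have : S (n' + 1) ≤ S n := hSmono.monotone (Nat.succ_le_of_lt hlt)
        omega
    set r : ℕ → Q := fun m => s (hexists m).choose (m - S (hexists m).choose) with hr
    have hA1 : ∀ n k, k < (σ n).length → r (S n + k) = s n k := by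
      intro n k hk
      obtain ⟨h1, h2⟩ := (hexists (S n + k)).choose_spec
      have hn : (hexists (S n + k)).choose = n := by
        refine huniq (S n + k) _ n h1 h2 (Nat.le_add_right _ _) ?_
        rw [hSsucc]; omega
      simp only [hr]
      rw [hn]
      congr 1
      omega
    have hA : ∀ n k, k ≤ (σ n).length → r (S n + k) = s n k := by
      intro n k hk
      rcases Nat.lt_or_ge k (σ n).length with h | h
      · exact hA1 n k h
      · have hk' : k = (σ n).length := by omega
        subst hk'
        have : S n + (σ n).length = S (n + 1) + 0 := by rw [hSsucc]; omega
        rw [this, hA1 (n + 1) 0 (hL (n + 1)), hs0, ← hslen]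
    refine ⟨r, ?_, ?_, ?_⟩
    · have := hA 0 0 (Nat.zero_le _)
      rw [hS0] at this
      simpa [hs0, hq0] using this
    · intro m
      obtain ⟨n, h1, h2⟩ := hexists m
      have hk : m - S n < (σ n).length := by rw [hSsucc] at h2; omega
      have hm : m = S n + (m - S n) := by omega
      have hρ : ρ m = (σ n).get ⟨m - S n, hk⟩ := by
        conv_lhs => rw [hm]
        exact hflat n (m - S n) hk
      have e1 : r m = s n (m - S n) := by conv_lhs => rw [hm, hA1 n _ hk]
      have e2 : r (m + 1) = s n (m - S n + 1) := by
        have : m + 1 = S n + (m - S n + 1) := by omega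
        rw [this, hA n _ (by omega)]
      rw [e1, e2, hρ]
      exact hstep n (m - S n) hk
    · intro N
      obtain ⟨m, hm, hbm⟩ := hb N
      obtain ⟨k, hk, hFk⟩ := hF m hbm
      refine ⟨S m + k, ?_, ?_⟩
      · have := hSge m; omega
      · rw [hA m k hk]; exact hFk
end
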